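/- Geometric convergence of the fixed point iteration for positive concave mappings: let g : ℝⁿ₊ → int(ℝⁿ₊) be concave with respect to the componentwise order and have a fixed point x⋆ ∈ int(ℝⁿ₊). Then for every x₁ ∈ ℝⁿ₊, the iterates x_{k+1} = g(x_k) converge to x⋆ geometrically: there exist c ∈ [0,1) and γ > 0 such that ‖x_{k+1} - x⋆‖ ≤ γ·cᵏ for all k ∈ ℕ, where ‖·‖ is any norm on ℝⁿ. -/

import Mathlib

set_option maxHeartbeats 1000000 in
/-- Auxiliary: a positive concave map on the nonnegative orthant is monotone. -/
lemma pc_mono_aux {n : ℕ} (g : (Fin n → ℝ) → (Fin n → ℝ))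
    (hpos : ∀ z : Fin n → ℝ, 0 ≤ z → ∀ i, 0 < g z i)
    (hconc : ∀ x y : Fin n → ℝ, 0 ≤ x → 0 ≤ y → ∀ t : ℝ, 0 < t → t < 1 →
      t • g x + (1 - t) • g y ≤ g (t • x + (1 - t) • y))
    (p q : Fin n → ℝ) (hp : 0 ≤ p) (hpq : p ≤ q) : g p ≤ g q := by
  intro i
  by_contra h
  push_neg at h
  have hq : (0 : Fin n → ℝ) ≤ q := le_trans hp hpq
  have hgp := hpos p hp i
  have hgq := hpos q hq i
  have ht0 : 0 < (g p i - g q i) / (2 * g p i) := div_pos (by linarith) (by linarith)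
  have ht1 : (g p i - g q i) / (2 * g p i) < 1 := by
    rw [div_lt_one (by linarith)]; linarith
  set t : ℝ := (g p i - g q i) / (2 * g p i) with ht_def
  have hz : (0 : Fin n → ℝ) ≤ p + t⁻¹ • (q - p) := by
    intro j
    have h1 : (0 : ℝ) ≤ p j := hp j
    have h2 : p j ≤ q j := hpq j
    have h3 : 0 ≤ t⁻¹ * (q j - p j) := mul_nonneg (inv_nonneg.mpr ht0.le) (by linarith)
    simp only [Pi.add_apply, Pi.smul_apply, Pi.sub_apply, smul_eq_mul, Pi.zero_apply]
    linarith
  have key := hconc (p + t⁻¹ • (q - p)) p hz hp t ht0 ht1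
  have hzq : t • (p + t⁻¹ • (q - p)) + (1 - t) • p = q := by
    funext j
    simp only [Pi.add_apply, Pi.smul_apply, Pi.sub_apply, smul_eq_mul]
    field_simp
    ring
  rw [hzq] at key
  have hki := key i
  simp only [Pi.add_apply, Pi.smul_apply, smul_eq_mul] at hki
  have hgz := (hpos _ hz i).le
  have htp : t * g p i = (g p i - g q i) / 2 := by
    rw [ht_def]; field_simp
  nlinarith [mul_nonneg ht0.le hgz]

set_option maxHeartbeats 1000000 in
/-- Geometric convergence of the fixed point iteration for positive
concave mappings. -/
theorem pc_fixed_point_iteration_geometric {n : ℕ}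
    (g : (Fin n → ℝ) → (Fin n → ℝ))
    (hpos : ∀ z : Fin n → ℝ, 0 ≤ z → ∀ i, 0 < g z i)
    (hconc : ∀ x y : Fin n → ℝ, 0 ≤ x → 0 ≤ y → ∀ t : ℝ, 0 < t → t < 1 →
      t • g x + (1 - t) • g y ≤ g (t • x + (1 - t) • y))
    (xstar : Fin n → ℝ) (hxstar : ∀ i, 0 < xstar i) (hfix : g xstar = xstar)
    (x₁ : Fin n → ℝ) (hx₁ : 0 ≤ x₁)
    (x : ℕ → Fin n → ℝ) (hx0 : x 0 = x₁) (hxk : ∀ k, x (k + 1) = g (x k)) :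
    ∃ c : ℝ, 0 ≤ c ∧ c < 1 ∧ ∃ γ : ℝ, 0 < γ ∧
      ∀ k : ℕ, ‖x (k + 1) - xstar‖ ≤ γ * c ^ k := by
  classical
  have hxstar_nn : (0 : Fin n → ℝ) ≤ xstar := fun i => (hxstar i).le
  -- nonnegativity of iterates
  have hxnn : ∀ k, (0 : Fin n → ℝ) ≤ x k := by
    intro k
    induction k with
    | zero => rw [hx0]; exact hx₁
    | succ k ih => rw [hxk]; exact fun i => (hpos _ ih i).le
  have hx1pos : ∀ i, 0 < x 1 i := by
    intro i; rw [hxk 0]; exact hpos _ (hxnn 0) i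
  -- g 0 is positive
  have hu : ∀ i, 0 < g 0 i := hpos 0 le_rfl
  -- choose δ ∈ (0, 1/2] with δ * xstar i ≤ g 0 i for all i
  obtain ⟨δ, hδ_pos, hδ_half, hδ_le⟩ :
      ∃ δ : ℝ, 0 < δ ∧ δ ≤ 1/2 ∧ ∀ i, δ * xstar i ≤ g 0 i := by
    have hSne : (insert (1/2 : ℝ)
        ((Finset.univ : Finset (Fin n)).image (fun i => g 0 i / xstar i))).Nonempty :=
      ⟨1/2, Finset.mem_insert_self _ _⟩
    refine ⟨Finset.min' _ hSne, ?_, Finset.min'_le _ _ (Finset.mem_insert_self _ _), ?_⟩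
    · have hmem := Finset.min'_mem _ hSne
      rcases Finset.mem_insert.mp hmem with h | h
      · rw [h]; norm_num
      · obtain ⟨i, _, hi⟩ := Finset.mem_image.mp h
        rw [← hi]; exact div_pos (hu i) (hxstar i)
    · intro i
      have : Finset.min' _ hSne ≤ g 0 i / xstar i :=
        Finset.min'_le _ _
          (Finset.mem_insert_of_mem (Finset.mem_image_of_mem _ (Finset.mem_univ i)))
      rw [le_div_iff₀ (hxstar i)] at this
      linarith
  -- choose a ∈ (0,1] and b ≥ 1 sandwiching x 1 between multiples of xstar
  obtain ⟨a, ha0, ha1, ha_le⟩ :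
      ∃ a : ℝ, 0 < a ∧ a ≤ 1 ∧ ∀ i, a * xstar i ≤ x 1 i := by
    have hSne : (insert (1 : ℝ)
        ((Finset.univ : Finset (Fin n)).image (fun i => x 1 i / xstar i))).Nonempty :=
      ⟨1, Finset.mem_insert_self _ _⟩
    refine ⟨Finset.min' _ hSne, ?_, Finset.min'_le _ _ (Finset.mem_insert_self _ _), ?_⟩
    · have hmem := Finset.min'_mem _ hSne
      rcases Finset.mem_insert.mp hmem with h | h
      · rw [h]; norm_num
      · obtain ⟨i, _, hi⟩ := Finset.mem_image.mp h
        rw [← hi]; exact div_pos (hx1pos i) (hxstar i)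
    · intro i
      have : Finset.min' _ hSne ≤ x 1 i / xstar i :=
        Finset.min'_le _ _
          (Finset.mem_insert_of_mem (Finset.mem_image_of_mem _ (Finset.mem_univ i)))
      rw [le_div_iff₀ (hxstar i)] at this
      linarith
  obtain ⟨b, hb1, hb_ge⟩ :
      ∃ b : ℝ, 1 ≤ b ∧ ∀ i, x 1 i ≤ b * xstar i := by
    have hSne : (insert (1 : ℝ)
        ((Finset.univ : Finset (Fin n)).image (fun i => x 1 i / xstar i))).Nonempty :=
      ⟨1, Finset.mem_insert_self _ _⟩
    refine ⟨Finset.max' _ hSne, Finset.le_max' _ _ (Finset.mem_insert_self _ _), ?_⟩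
    intro i
    have hmem : x 1 i / xstar i ∈ insert (1 : ℝ)
        ((Finset.univ : Finset (Fin n)).image (fun i => x 1 i / xstar i)) :=
      Finset.mem_insert_of_mem (Finset.mem_image_of_mem _ (Finset.mem_univ i))
    have : x 1 i / xstar i ≤ Finset.max' _ hSne := Finset.le_max' _ _ hmem
    rw [div_le_iff₀ (hxstar i)] at this
    linarith
  -- key estimate below the fixed point
  have hL1 : ∀ t : ℝ, 0 < t → t ≤ 1 → ∀ i,
      (t + (1 - t) * δ) * xstar i ≤ g (t • xstar) i := by
    intro t ht0 ht1 i
    rcases eq_or_lt_of_le ht1 with heq | hlt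
    · rw [heq, one_smul, hfix]
      nlinarith [hxstar i]
    · have key := hconc xstar 0 hxstar_nn le_rfl t ht0 hlt
      rw [smul_zero, add_zero, hfix] at key
      have hki := key i
      simp only [Pi.add_apply, Pi.smul_apply, smul_eq_mul] at hki
      have h1 := hδ_le i
      nlinarith [hxstar i]
  -- key estimate above the fixed point
  have hL2 : ∀ s : ℝ, 1 ≤ s → ∀ i,
      g (s • xstar) i ≤ (s - (s - 1) * δ) * xstar i := by
    intro s hs i
    rcases eq_or_lt_of_le hs with heq | hlt
    · rw [← heq, one_smul, hfix]
      nlinarith [hxstar i]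
    · have hs0 : 0 < s := by linarith
      have ht0 : 0 < s⁻¹ := inv_pos.mpr hs0
      have ht1 : s⁻¹ < 1 := by
        rw [inv_lt_one_iff₀]; right; exact hlt
      have hsnn : (0 : Fin n → ℝ) ≤ s • xstar := by
        intro j; simp only [Pi.smul_apply, smul_eq_mul, Pi.zero_apply]
        exact mul_nonneg hs0.le (hxstar j).le
      have key := hconc (s • xstar) 0 hsnn le_rfl s⁻¹ ht0 ht1
      rw [smul_zero, add_zero, smul_smul, inv_mul_cancel₀ (ne_of_gt hs0), one_smul,
        hfix] at key
      have hki := key i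
      simp only [Pi.add_apply, Pi.smul_apply, smul_eq_mul] at hki
      have h1 := hδ_le i
      have hmul : g (s • xstar) i + (s - 1) * g 0 i ≤ s * xstar i := by
        have h2 := mul_le_mul_of_nonneg_left hki hs0.le
        have e : s * (s⁻¹ * g (s • xstar) i + (1 - s⁻¹) * g 0 i)
            = g (s • xstar) i + (s - 1) * g 0 i := by
          field_simp
        rw [e] at h2
        exact h2
      have h3 : (s - 1) * (δ * xstar i) ≤ (s - 1) * g 0 i :=
        mul_le_mul_of_nonneg_left h1 (by linarith)
      nlinarith
  -- the contraction factor
  have hc0 : (0:ℝ) ≤ 1 - δ := by linarith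
  have hc1 : 1 - δ < 1 := by linarith
  have hck : ∀ k : ℕ, 0 ≤ (1 - δ) ^ k ∧ (1 - δ) ^ k ≤ 1 :=
    fun k => ⟨pow_nonneg hc0 k, pow_le_one₀ hc0 hc1.le⟩
  -- main sandwich by induction
  have main : ∀ k : ℕ,
      (∀ i, (1 - (1 - δ) ^ k * (1 - a)) * xstar i ≤ x (k + 1) i) ∧
      (∀ i, x (k + 1) i ≤ (1 + (1 - δ) ^ k * (b - 1)) * xstar i) := by
    intro k
    induction k with
    | zero =>
      constructor
      · intro i; rw [pow_zero, one_mul]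
        have := ha_le i
        have := hxstar i
        nlinarith
      · intro i; rw [pow_zero, one_mul]
        have := hb_ge i
        nlinarith
    | succ k ih =>
      obtain ⟨ihl, ihr⟩ := ih
      have hk0 := (hck k).1
      have hk1 := (hck k).2
      have hA_lb : a ≤ 1 - (1 - δ) ^ k * (1 - a) := by nlinarith
      have hA_ub : 1 - (1 - δ) ^ k * (1 - a) ≤ 1 := by nlinarith
      have hB_lb : 1 ≤ 1 + (1 - δ) ^ k * (b - 1) := by nlinarith
      have hAk0 : 0 < 1 - (1 - δ) ^ k * (1 - a) := lt_of_lt_of_le ha0 hA_lb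
      have hAnn : (0 : Fin n → ℝ) ≤ (1 - (1 - δ) ^ k * (1 - a)) • xstar := by
        intro j; simp only [Pi.smul_apply, smul_eq_mul, Pi.zero_apply]
        exact mul_nonneg hAk0.le (hxstar j).le
      have h1 : g ((1 - (1 - δ) ^ k * (1 - a)) • xstar) ≤ g (x (k + 1)) :=
        pc_mono_aux g hpos hconc _ _ hAnn (fun j => by
          simpa only [Pi.smul_apply, smul_eq_mul] using ihl j)
      have h2 : g (x (k + 1)) ≤ g ((1 + (1 - δ) ^ k * (b - 1)) • xstar) :=
        pc_mono_aux g hpos hconc _ _ (hxnn (k + 1)) (fun j => by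
          simpa only [Pi.smul_apply, smul_eq_mul] using ihr j)
      constructor
      · intro i
        have hstep := hL1 _ hAk0 hA_ub i
        have heq : (1 - (1 - δ) ^ k * (1 - a)) + (1 - (1 - (1 - δ) ^ k * (1 - a))) * δ
            = 1 - (1 - δ) ^ (k + 1) * (1 - a) := by
          rw [pow_succ]; ring
        rw [heq] at hstep
        have := h1 i
        rw [hxk (k + 1)]
        linarith
      · intro i
        have hstep := hL2 _ hB_lb i
        have heq : (1 + (1 - δ) ^ k * (b - 1)) - ((1 + (1 - δ) ^ k * (b - 1)) - 1) * δ
            = 1 + (1 - δ) ^ (k + 1) * (b - 1) := by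
          rw [pow_succ]; ring
        rw [heq] at hstep
        have := h2 i
        rw [hxk (k + 1)]
        linarith
  -- conclusion
  have hM0 : (0:ℝ) ≤ max (1 - a) (b - 1) := le_trans (by linarith) (le_max_right _ _)
  refine ⟨1 - δ, hc0, hc1, max (1 - a) (b - 1) * ‖xstar‖ + 1, by positivity, ?_⟩
  intro k
  have hγc : 0 ≤ (max (1 - a) (b - 1) * ‖xstar‖ + 1) * (1 - δ) ^ k := by positivity
  rw [pi_norm_le_iff_of_nonneg hγc]
  intro i
  have hxi : xstar i ≤ ‖xstar‖ := le_trans (le_abs_self _)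
    (by simpa [Real.norm_eq_abs] using norm_le_pi_norm xstar i)
  obtain ⟨hl, hr⟩ := main k
  have hli := hl i
  have hri := hr i
  have hck0 := (hck k).1
  have hxs0 := (hxstar i).le
  have hnx : (0:ℝ) ≤ ‖xstar‖ := norm_nonneg _
  rw [Pi.sub_apply, Real.norm_eq_abs, abs_le]
  have hMa : 1 - a ≤ max (1 - a) (b - 1) := le_max_left _ _
  have hMb : b - 1 ≤ max (1 - a) (b - 1) := le_max_right _ _
  constructor
  · have key : (1 - δ) ^ k * ((1 - a) * xstar i)
        ≤ (1 - δ) ^ k * (max (1 - a) (b - 1) * ‖xstar‖) := by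
      apply mul_le_mul_of_nonneg_left _ hck0
      calc (1 - a) * xstar i ≤ max (1 - a) (b - 1) * xstar i := by nlinarith
        _ ≤ max (1 - a) (b - 1) * ‖xstar‖ := by nlinarith
    nlinarith
  · have key : (1 - δ) ^ k * ((b - 1) * xstar i)
        ≤ (1 - δ) ^ k * (max (1 - a) (b - 1) * ‖xstar‖) := by
      apply mul_le_mul_of_nonneg_left _ hck0
      calc (b - 1) * xstar i ≤ max (1 - a) (b - 1) * xstar i := by nlinarith
        _ ≤ max (1 - a) (b - 1) * ‖xstar‖ := by nlinarith
    nlinarith
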